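/- Poisson limit theorem: if pₙ is a sequence in [0,1] with n·pₙ → λ > 0, then for every fixed k ∈ ℕ, the binomial probability C(n,k) pₙᵏ (1-pₙ)^{n-k} converges to the Poisson probability λᵏ e^{-λ}/k! as n → ∞. -/

import Mathlib

open Real Filter

/-- Poisson limit theorem: if `n * pₙ → λ > 0`, then for each fixed `k` the binomial
probability `C(n,k) pₙᵏ (1-pₙ)^(n-k)` converges to `λᵏ e^{-λ}/k!`. -/
theorem poisson_limit (p : ℕ → ℝ) (hp : ∀ n, p n ∈ Set.Icc (0 : ℝ) 1)
    (lam : ℝ) (hlam : 0 < lam)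
    (h : Tendsto (fun n : ℕ => (n : ℝ) * p n) atTop (nhds lam)) (k : ℕ) :
    Tendsto (fun n : ℕ => (n.choose k : ℝ) * p n ^ k * (1 - p n) ^ (n - k)) atTop
      (nhds (lam ^ k * Real.exp (-lam) / (Nat.factorial k : ℝ))) := by
  have hp0 : ∀ n, 0 ≤ p n := fun n => (hp n).1
  -- p n → 0
  have hinv : Tendsto (fun n : ℕ => ((n : ℝ))⁻¹) atTop (nhds 0) :=
    tendsto_inv_atTop_zero.comp tendsto_natCast_atTop_atTop
  have hptend : Tendsto p atTop (nhds 0) := by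
    have h1 : Tendsto (fun n : ℕ => ((n : ℝ) * p n) * ((n : ℝ))⁻¹) atTop (nhds (lam * 0)) :=
      h.mul hinv
    rw [mul_zero] at h1
    refine h1.congr' ?_
    filter_upwards [eventually_ge_atTop 1] with n hn
    have : (n : ℝ) ≠ 0 := by positivity
    field_simp
  -- eventually p n ≤ 1/2
  have hsmall : ∀ᶠ n in atTop, p n ≤ 1/2 := by
    have := hptend.eventually_le_const (show (0:ℝ) < 1/2 by norm_num)
    filter_upwards [this] with n hn using hn
  -- factor A : ∏ (n - i)/n → 1
  have hA : Tendsto (fun n : ℕ => ∏ i ∈ Finset.range k, (((n : ℝ) - i) / n)) atTop (nhds 1) := by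
    have : (1 : ℝ) = ∏ i ∈ Finset.range k, (1 : ℝ) := by simp
    rw [this]
    refine tendsto_finset_prod _ (fun i _ => ?_)
    have h1 : Tendsto (fun n : ℕ => 1 - (i : ℝ) * ((n : ℝ))⁻¹) atTop (nhds (1 - (i:ℝ) * 0)) :=
      tendsto_const_nhds.sub (tendsto_const_nhds.mul hinv)
    rw [mul_zero, sub_zero] at h1
    refine h1.congr' ?_
    filter_upwards [eventually_ge_atTop 1] with n hn
    have : (n : ℝ) ≠ 0 := by positivity
    field_simp
  -- factor B : (n p)^k / k! → lam^k / k!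
  have hB : Tendsto (fun n : ℕ => ((n : ℝ) * p n) ^ k / (Nat.factorial k : ℝ)) atTop
      (nhds (lam ^ k / (Nat.factorial k : ℝ))) :=
    (h.pow k).div_const _
  -- factor C : (1 - p n)^(n-k) → exp (-lam)
  have hC : Tendsto (fun n : ℕ => (1 - p n) ^ (n - k)) atTop (nhds (Real.exp (-lam))) := by
    -- n * log(1 - p n) → -lam by squeeze
    have hnlog : Tendsto (fun n : ℕ => (n : ℝ) * Real.log (1 - p n)) atTop (nhds (-lam)) := by
      have hlow : Tendsto (fun n : ℕ => -((n : ℝ) * p n) * (1 - p n)⁻¹) atTop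
          (nhds (-lam * (1 - 0)⁻¹)) := (h.neg.mul ((tendsto_const_nhds.sub hptend).inv₀ (by norm_num)))
      have hup : Tendsto (fun n : ℕ => -((n : ℝ) * p n)) atTop (nhds (-lam)) := h.neg
      have hlow' : nhds (-lam * (1 - (0:ℝ))⁻¹) = nhds (-lam) := by norm_num
      rw [hlow'] at hlow
      refine tendsto_of_tendsto_of_tendsto_of_le_of_le' hlow hup ?_ ?_
      · filter_upwards [hsmall] with n hn
        have h2 : (0:ℝ) < 1 - p n := by linarith
        have := Real.one_sub_inv_le_log_of_pos h2
        have hn0 : (0:ℝ) ≤ (n:ℝ) := Nat.cast_nonneg n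
        have key : -(p n) * (1 - p n)⁻¹ ≤ Real.log (1 - p n) := by
          have : 1 - (1 - p n)⁻¹ = -(p n) * (1 - p n)⁻¹ := by field_simp; ring
          linarith [this ▸ (Real.one_sub_inv_le_log_of_pos h2)]
        calc -((n:ℝ) * p n) * (1 - p n)⁻¹ = (n:ℝ) * (-(p n) * (1 - p n)⁻¹) := by ring
          _ ≤ (n:ℝ) * Real.log (1 - p n) := by
              exact mul_le_mul_of_nonneg_left key hn0
      · filter_upwards [hsmall] with n hn
        have h2 : (0:ℝ) < 1 - p n := by linarith
        have := Real.log_le_sub_one_of_pos h2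
        have hn0 : (0:ℝ) ≤ (n:ℝ) := Nat.cast_nonneg n
        calc (n:ℝ) * Real.log (1 - p n) ≤ (n:ℝ) * (1 - p n - 1) :=
              mul_le_mul_of_nonneg_left this hn0
          _ = -((n:ℝ) * p n) := by ring
    have hklog : Tendsto (fun n : ℕ => (k : ℝ) * Real.log (1 - p n)) atTop (nhds 0) := by
      have : Tendsto (fun n : ℕ => Real.log (1 - p n)) atTop (nhds (Real.log (1 - 0))) :=
        (Real.continuousAt_log (by norm_num)).tendsto.comp (tendsto_const_nhds.sub hptend)
      simpa using tendsto_const_nhds.mul this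
    have hexp : Tendsto (fun n : ℕ => Real.exp ((n : ℝ) * Real.log (1 - p n)
        - (k : ℝ) * Real.log (1 - p n))) atTop (nhds (Real.exp (-lam - 0))) :=
      (Real.continuous_exp.tendsto _).comp (hnlog.sub hklog)
    rw [sub_zero] at hexp
    refine hexp.congr' ?_
    filter_upwards [hsmall, eventually_ge_atTop k] with n hn hnk
    have h2 : (0:ℝ) < 1 - p n := by linarith
    rw [← Real.exp_log (pow_pos h2 (n - k)), Real.log_pow]
    congr 1
    rw [Nat.cast_sub hnk]
    ring
  -- combine
  have hfin : Tendsto (fun n : ℕ => (∏ i ∈ Finset.range k, (((n : ℝ) - i) / n)) *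
      (((n : ℝ) * p n) ^ k / (Nat.factorial k : ℝ)) * (1 - p n) ^ (n - k)) atTop
      (nhds (1 * (lam ^ k / (Nat.factorial k : ℝ)) * Real.exp (-lam))) :=
    (hA.mul hB).mul hC
  have heq : (lam ^ k * Real.exp (-lam) / (Nat.factorial k : ℝ)) =
      1 * (lam ^ k / (Nat.factorial k : ℝ)) * Real.exp (-lam) := by ring
  rw [heq]
  refine hfin.congr' ?_
  filter_upwards [eventually_ge_atTop (max k 1)] with n hn
  have hnk : k ≤ n := le_trans (le_max_left _ _) hn
  have hn1 : 1 ≤ n := le_trans (le_max_right _ _) hn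
  have hn0 : (n : ℝ) ≠ 0 := by positivity
  have hchoose : (n.choose k : ℝ) = (∏ i ∈ Finset.range k, ((n : ℝ) - i)) / (Nat.factorial k : ℝ) := by
    have h1 : (n.descFactorial k : ℝ) = (Nat.factorial k : ℝ) * (n.choose k : ℝ) := by
      rw [← Nat.cast_mul, Nat.descFactorial_eq_factorial_mul_choose]
    have h2 : (n.descFactorial k : ℝ) = ∏ i ∈ Finset.range k, ((n : ℝ) - i) := by
      rw [Nat.descFactorial_eq_prod_range, Nat.cast_prod]
      refine Finset.prod_congr rfl (fun i hi => ?_)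
      rw [Nat.cast_sub (le_trans (Finset.mem_range.mp hi).le hnk)]
    rw [← h2, h1]
    field_simp
  rw [hchoose]
  rw [Finset.prod_div_distrib, mul_pow]
  rw [Finset.prod_const, Finset.card_range]
  field_simp
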